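/- For any integers A, B, any positive integer n, and the function f(y) = (1 + y^A)^B on y > 0 (with A, B possibly negative), the n-th derivative satisfies f^{(n)}(y) = n!·Σ_{i=1}^n Σ_{j_1+⋯+j_i = n, j_k ≥ 1} C(B, i)·(1 + y^A)^{B−i}·C(A, j_1)⋯C(A, j_i)·y^{Ai−n}, where C(x, k) = x(x−1)⋯(x−k+1)/k! is the generalized binomial coefficient. -/

import Mathlib

open Polynomial in
lemma choose_mul_succ (r : ℤ) (k : ℕ) :
    (r - k) * Ring.choose r k = (k + 1) * Ring.choose r (k + 1) := by
  have h1 := Ring.descPochhammer_eq_factorial_smul_choose r (k + 1)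
  have h0 := Ring.descPochhammer_eq_factorial_smul_choose r k
  rw [descPochhammer_succ_right] at h1
  rw [Polynomial.smeval_mul, h0, Polynomial.smeval_sub, Polynomial.smeval_X] at h1
  have : Polynomial.smeval ((k : Polynomial ℤ)) r = (k : ℤ) := by
    simp [Polynomial.smeval_natCast]
  rw [this] at h1
  have hk : (Nat.factorial k : ℤ) ≠ 0 := by exact_mod_cast Nat.factorial_ne_zero k
  apply mul_left_cancel₀ hk
  have h1' : (k.factorial : ℤ) * Ring.choose r k * (r - k) = ((k+1).factorial : ℤ) * Ring.choose r (k+1) := by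
    simpa [nsmul_eq_mul] using h1
  rw [Nat.factorial_succ] at h1'
  push_cast at h1' ⊢
  ring_nf
  ring_nf at h1'
  linarith [h1']

lemma choose_mul_succ_real (r : ℤ) (k : ℕ) :
    ((r : ℝ) - (k : ℝ)) * ((Ring.choose r k : ℤ) : ℝ)
      = ((k : ℝ) + 1) * ((Ring.choose r (k + 1) : ℤ) : ℝ) := by
  have := congrArg (fun z : ℤ => (z : ℝ)) (choose_mul_succ r k)
  push_cast at this
  convert this using 2 <;> push_cast <;> ring

/-- Compositions of `m` into `i` parts, each part in `[1, m]`. -/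
def cP (m i : ℕ) : Finset (Fin i → ℕ) :=
  (Fintype.piFinset fun _ : Fin i => Finset.Icc 1 m).filter fun j => ∑ k, j k = m

/-- The summand. -/
noncomputable def W (A B : ℤ) (m i : ℕ) (y : ℝ) (j : Fin i → ℕ) : ℝ :=
  ((Ring.choose B i : ℤ) : ℝ) * (1 + y ^ A) ^ (B - (i : ℤ))
    * (∏ k, ((Ring.choose A (j k) : ℤ) : ℝ)) * y ^ (A * (i : ℤ) - (m : ℤ))
lemma mem_cP {m i : ℕ} {j : Fin i → ℕ} :
    j ∈ cP m i ↔ (∀ k, 1 ≤ j k ∧ j k ≤ m) ∧ ∑ k, j k = m := by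
  simp [cP, Fintype.mem_piFinset, Finset.mem_Icc]

lemma cP_empty_of_lt {m i : ℕ} (h : m < i) : cP m i = ∅ := by
  refine Finset.eq_empty_of_forall_notMem fun j hj => ?_
  obtain ⟨h1, h2⟩ := mem_cP.mp hj
  have : (Finset.univ : Finset (Fin i)).card • 1 ≤ ∑ k, j k :=
    Finset.card_nsmul_le_sum _ _ _ fun k _ => (h1 k).1
  simp only [Finset.card_univ, Fintype.card_fin, smul_eq_mul, mul_one] at this
  omega

lemma sum_insert_bij {n i : ℕ} (k : Fin (i + 1)) (F : (Fin (i + 1) → ℕ) → ℝ) :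
    ∑ j' ∈ (cP (n + 1) (i + 1)).filter (fun j' => j' k = 1), F j'
    = ∑ j ∈ cP n i, F (k.insertNth 1 j) := by
  refine Finset.sum_nbij' (fun j' => k.removeNth j') (fun j => k.insertNth 1 j) ?_ ?_ ?_ ?_ ?_
  · intro j' hj'
    obtain ⟨hj', hk1⟩ := Finset.mem_filter.mp hj'
    obtain ⟨h1, h2⟩ := mem_cP.mp hj'
    have hsum : ∑ l, k.removeNth j' l = n := by
      have h3 := Fin.sum_univ_succAbove j' k
      rw [h2, hk1] at h3
      simp only [Fin.removeNth]
      omega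
    refine mem_cP.mpr ⟨fun l => ⟨(h1 _).1, ?_⟩, hsum⟩
    calc k.removeNth j' l ≤ ∑ l, k.removeNth j' l :=
          Finset.single_le_sum (fun _ _ => Nat.zero_le _) (Finset.mem_univ l)
      _ = n := hsum
  · intro j hj
    obtain ⟨h1, h2⟩ := mem_cP.mp hj
    refine Finset.mem_filter.mpr ⟨mem_cP.mpr ⟨?_, ?_⟩, by simp⟩
    · rw [Fin.forall_iff_succAbove k]
      constructor
      · simp
      · intro m
        simp only [Fin.insertNth_apply_succAbove]
        exact ⟨(h1 m).1, le_trans (h1 m).2 (Nat.le_succ n)⟩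
    · rw [Fin.sum_univ_succAbove _ k]
      simp [h2, Nat.add_comm]
  · intro j' hj'
    obtain ⟨_, hk1⟩ := Finset.mem_filter.mp hj'
    have := Fin.insertNth_self_removeNth k j'
    rwa [hk1] at this
  · intro j hj
    exact @Fin.removeNth_insertNth _ (fun _ => ℕ) k 1 j
  · intro j' hj'
    obtain ⟨_, hk1⟩ := Finset.mem_filter.mp hj'
    congr 1
    have := Fin.insertNth_self_removeNth k j'
    rw [hk1] at this
    exact this.symm

lemma sum_update_bij {n i : ℕ} (k : Fin i) (F : (Fin i → ℕ) → ℝ) :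
    ∑ j' ∈ (cP (n + 1) i).filter (fun j' => 2 ≤ j' k), F j'
    = ∑ j ∈ cP n i, F (Function.update j k (j k + 1)) := by
  refine Finset.sum_nbij' (fun j' => Function.update j' k (j' k - 1))
    (fun j => Function.update j k (j k + 1)) ?_ ?_ ?_ ?_ ?_
  · intro j' hj'
    obtain ⟨hj', hk2⟩ := Finset.mem_filter.mp hj'
    obtain ⟨h1, h2⟩ := mem_cP.mp hj'
    have hsplit : j' k + ∑ l ∈ Finset.univ.erase k, j' l = n + 1 := by
      rw [Finset.add_sum_erase _ _ (Finset.mem_univ k)]; exact h2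
    refine mem_cP.mpr ⟨fun l => ?_, ?_⟩
    · rcases eq_or_ne l k with rfl | hlk
      · simp only [Function.update_self]; omega
      · rw [Function.update_of_ne hlk]
        have hle : j' l ≤ ∑ m ∈ Finset.univ.erase k, j' m :=
          Finset.single_le_sum (fun _ _ => Nat.zero_le _)
            (Finset.mem_erase.mpr ⟨hlk, Finset.mem_univ l⟩)
        exact ⟨(h1 l).1, by omega⟩
    · rw [Finset.sum_update_of_mem (Finset.mem_univ k), Finset.sdiff_singleton_eq_erase]
      omega
  · intro j hj
    obtain ⟨h1, h2⟩ := mem_cP.mp hj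
    have hsplit : j k + ∑ l ∈ Finset.univ.erase k, j l = n := by
      rw [Finset.add_sum_erase _ _ (Finset.mem_univ k)]; exact h2
    refine Finset.mem_filter.mpr ⟨mem_cP.mpr ⟨fun l => ?_, ?_⟩,
      by simp only [Function.update_self]; exact Nat.succ_le_succ (h1 k).1⟩
    · rcases eq_or_ne l k with rfl | hlk
      · simp only [Function.update_self]
        exact ⟨by omega, by have := (h1 l).2; omega⟩
      · rw [Function.update_of_ne hlk]
        exact ⟨(h1 l).1, by have := (h1 l).2; omega⟩
    · rw [Finset.sum_update_of_mem (Finset.mem_univ k), Finset.sdiff_singleton_eq_erase]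
      omega
  · intro j' hj'
    obtain ⟨_, hk2⟩ := Finset.mem_filter.mp hj'
    ext l
    rcases eq_or_ne l k with rfl | hlk
    · simp only [Function.update_idem, Function.update_self]; omega
    · simp [Function.update_of_ne hlk]
  · intro j hj
    ext l
    rcases eq_or_ne l k with rfl | hlk
    · simp [Function.update_idem]
    · simp [Function.update_of_ne hlk]
  · intro j' hj'
    obtain ⟨_, hk2⟩ := Finset.mem_filter.mp hj'
    congr 1
    ext l
    rcases eq_or_ne l k with rfl | hlk
    · simp only [Function.update_idem, Function.update_self]; omega
    · simp [Function.update_of_ne hlk]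
lemma part2 (A B : ℤ) (n : ℕ) (y : ℝ) (hy : 0 < y) :
    ∑ i ∈ Finset.Icc 1 (n + 1), ∑ j' ∈ cP (n + 1) i,
        ∑ k, (if 2 ≤ j' k then (j' k : ℝ) * W A B (n + 1) i y j' else 0)
    = ∑ i ∈ Finset.Icc 1 n, ∑ j ∈ cP n i,
        ((Ring.choose B i : ℤ) : ℝ) * (1 + y ^ A) ^ (B - (i : ℤ))
          * (∏ k, ((Ring.choose A (j k) : ℤ) : ℝ))
          * (((A * (i : ℤ) - (n : ℤ) : ℤ) : ℝ) * y ^ (A * (i : ℤ) - (n : ℤ) - 1)) := by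
  have step1 : ∀ i : ℕ, ∑ j' ∈ cP (n + 1) i,
        ∑ k, (if 2 ≤ j' k then (j' k : ℝ) * W A B (n + 1) i y j' else 0)
      = ∑ j ∈ cP n i, ∑ k : Fin i,
          ((j k : ℝ) + 1) * W A B (n + 1) i y (Function.update j k (j k + 1)) := by
    intro i
    rw [Finset.sum_comm]
    rw [show (∑ k : Fin i, ∑ j' ∈ cP (n+1) i,
          (if 2 ≤ j' k then (j' k : ℝ) * W A B (n + 1) i y j' else 0))
        = ∑ k : Fin i, ∑ j' ∈ (cP (n+1) i).filter (fun j' => 2 ≤ j' k),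
            (j' k : ℝ) * W A B (n + 1) i y j' from
      Finset.sum_congr rfl fun k _ => (Finset.sum_filter _ _).symm]
    rw [show (∑ k : Fin i, ∑ j' ∈ (cP (n+1) i).filter (fun j' => 2 ≤ j' k),
            (j' k : ℝ) * W A B (n + 1) i y j')
        = ∑ k : Fin i, ∑ j ∈ cP n i,
            ((j k : ℝ) + 1) * W A B (n + 1) i y (Function.update j k (j k + 1)) from
      Finset.sum_congr rfl fun k _ => by
        rw [sum_update_bij k (fun j' => (j' k : ℝ) * W A B (n + 1) i y j')]
        refine Finset.sum_congr rfl fun j _ => ?_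
        rw [Function.update_self]
        push_cast
        ring_nf]
    exact Finset.sum_comm
  calc ∑ i ∈ Finset.Icc 1 (n + 1), ∑ j' ∈ cP (n + 1) i,
        ∑ k, (if 2 ≤ j' k then (j' k : ℝ) * W A B (n + 1) i y j' else 0)
      = ∑ i ∈ Finset.Icc 1 (n + 1), ∑ j ∈ cP n i, ∑ k : Fin i,
          ((j k : ℝ) + 1) * W A B (n + 1) i y (Function.update j k (j k + 1)) :=
        Finset.sum_congr rfl fun i _ => step1 i
    _ = ∑ i ∈ Finset.Icc 1 n, ∑ j ∈ cP n i, ∑ k : Fin i,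
          ((j k : ℝ) + 1) * W A B (n + 1) i y (Function.update j k (j k + 1)) := by
        rw [show Finset.Icc 1 (n + 1) = insert (n + 1) (Finset.Icc 1 n) from by
            ext a; simp only [Finset.mem_Icc, Finset.mem_insert]; omega,
          Finset.sum_insert (by simp [Finset.mem_Icc]),
          cP_empty_of_lt (Nat.lt_succ_self n), Finset.sum_empty, zero_add]
    _ = ∑ i ∈ Finset.Icc 1 n, ∑ j ∈ cP n i,
        ((Ring.choose B i : ℤ) : ℝ) * (1 + y ^ A) ^ (B - (i : ℤ))
          * (∏ k, ((Ring.choose A (j k) : ℤ) : ℝ))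
          * (((A * (i : ℤ) - (n : ℤ) : ℤ) : ℝ) * y ^ (A * (i : ℤ) - (n : ℤ) - 1)) := by
        refine Finset.sum_congr rfl fun i _ => Finset.sum_congr rfl fun j hj => ?_
        obtain ⟨h1, h2⟩ := mem_cP.mp hj
        have hprod : ∀ k : Fin i, (∏ l, ((Ring.choose A (Function.update j k (j k + 1) l) : ℤ) : ℝ))
            = ((Ring.choose A (j k + 1) : ℤ) : ℝ)
              * ∏ l ∈ Finset.univ.erase k, ((Ring.choose A (j l) : ℤ) : ℝ) := by
          intro k
          rw [← Finset.mul_prod_erase Finset.univ _ (Finset.mem_univ k), Function.update_self]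
          congr 1
          refine Finset.prod_congr rfl fun l hl => ?_
          rw [Function.update_of_ne (Finset.mem_erase.mp hl).1]
        have hW : ∀ k : Fin i, ((j k : ℝ) + 1) * W A B (n + 1) i y (Function.update j k (j k + 1))
            = ((A : ℝ) - (j k : ℝ)) * (((Ring.choose B i : ℤ) : ℝ) * (1 + y ^ A) ^ (B - (i : ℤ))
              * (∏ l, ((Ring.choose A (j l) : ℤ) : ℝ)) * y ^ (A * (i : ℤ) - ((n : ℤ) + 1))) := by
          intro k
          unfold W
          rw [hprod k, ← Finset.mul_prod_erase Finset.univ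
            (fun l => ((Ring.choose A (j l) : ℤ) : ℝ)) (Finset.mem_univ k)]
          have hch := choose_mul_succ_real A (j k)
          push_cast
          linear_combination (((Ring.choose B i : ℤ) : ℝ) * (1 + y ^ A) ^ (B - (i : ℤ))
            * (∏ l ∈ Finset.univ.erase k, ((Ring.choose A (j l) : ℤ) : ℝ))
            * y ^ (A * (i : ℤ) - ((n : ℤ) + 1))) * hch.symm
        rw [Finset.sum_congr rfl fun k _ => hW k, ← Finset.sum_mul]
        have hsum : ∑ k : Fin i, ((A : ℝ) - (j k : ℝ)) = (A : ℝ) * i - n := by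
          rw [Finset.sum_sub_distrib, Finset.sum_const, Finset.card_univ, Fintype.card_fin]
          have : ∑ k : Fin i, ((j k : ℝ)) = ((∑ k, j k : ℕ) : ℝ) := by push_cast; rfl
          rw [this, h2, nsmul_eq_mul, mul_comm]
        rw [hsum]
        have hexp : y ^ (A * (i : ℤ) - ((n : ℤ) + 1)) = y ^ (A * (i : ℤ) - (n : ℤ) - 1) := by
          congr 1; ring
        rw [hexp]
        push_cast
        ring
lemma part1 (A B : ℤ) (n : ℕ) (hn : 1 ≤ n) (y : ℝ) (hy : 0 < y) :
    ∑ i ∈ Finset.Icc 1 (n + 1), ∑ j' ∈ cP (n + 1) i,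
        ∑ k, (if j' k = 1 then W A B (n + 1) i y j' else 0)
    = ∑ i ∈ Finset.Icc 1 n, ∑ j ∈ cP n i,
        ((Ring.choose B i : ℤ) : ℝ)
          * ((((B - (i : ℤ) : ℤ)) : ℝ) * (1 + y ^ A) ^ (B - (i : ℤ) - 1) * ((A : ℝ) * y ^ (A - 1)))
          * (∏ k, ((Ring.choose A (j k) : ℤ) : ℝ)) * y ^ (A * (i : ℤ) - (n : ℤ)) := by
  set G : ℕ → ℝ := fun i => ∑ k : Fin i,
    ∑ j' ∈ (cP (n + 1) i).filter (fun j' => j' k = 1), W A B (n + 1) i y j' with hG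
  have step1 : ∀ i : ℕ, ∑ j' ∈ cP (n + 1) i,
      ∑ k, (if j' k = 1 then W A B (n + 1) i y j' else 0) = G i := by
    intro i
    rw [Finset.sum_comm, hG]
    exact Finset.sum_congr rfl fun k _ => (Finset.sum_filter _ _).symm
  have hG1 : G 1 = 0 := by
    rw [hG]
    refine Finset.sum_eq_zero fun k _ => ?_
    rw [Finset.filter_false_of_mem, Finset.sum_empty]
    intro j' hj'
    obtain ⟨h1, h2⟩ := mem_cP.mp hj'
    have hk0 : k = 0 := Subsingleton.elim _ _
    rw [Fin.sum_univ_one] at h2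
    rw [hk0, h2]
    omega
  calc ∑ i ∈ Finset.Icc 1 (n + 1), ∑ j' ∈ cP (n + 1) i,
        ∑ k, (if j' k = 1 then W A B (n + 1) i y j' else 0)
      = ∑ i ∈ Finset.Icc 1 (n + 1), G i := Finset.sum_congr rfl fun i _ => step1 i
    _ = ∑ i ∈ Finset.Icc 2 (n + 1), G i := by
        rw [show Finset.Icc 1 (n + 1) = insert 1 (Finset.Icc 2 (n + 1)) from by
            ext a; simp only [Finset.mem_Icc, Finset.mem_insert]; omega,
          Finset.sum_insert (by simp [Finset.mem_Icc]), hG1, zero_add]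
    _ = ∑ i ∈ Finset.Icc 1 n, G (i + 1) := by
        refine Finset.sum_nbij' (fun i' => i' - 1) (fun i => i + 1) ?_ ?_ ?_ ?_ ?_
        · intro i' hi'; simp only [Finset.mem_Icc] at *; omega
        · intro i hi; simp only [Finset.mem_Icc] at *; omega
        · intro i' hi'; simp only [Finset.mem_Icc] at hi'; show i' - 1 + 1 = i'; omega
        · intro i hi; simp only [Finset.mem_Icc] at hi; show i + 1 - 1 = i; omega
        · intro i' hi'; simp only [Finset.mem_Icc] at hi'
          exact (congrArg G (by omega : i' - 1 + 1 = i')).symm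
    _ = ∑ i ∈ Finset.Icc 1 n, ∑ j ∈ cP n i,
        ((Ring.choose B i : ℤ) : ℝ)
          * ((((B - (i : ℤ) : ℤ)) : ℝ) * (1 + y ^ A) ^ (B - (i : ℤ) - 1) * ((A : ℝ) * y ^ (A - 1)))
          * (∏ k, ((Ring.choose A (j k) : ℤ) : ℝ)) * y ^ (A * (i : ℤ) - (n : ℤ)) := by
        refine Finset.sum_congr rfl fun i hi => ?_
        rw [hG]
        have hWins : ∀ (k : Fin (i + 1)) (j : Fin i → ℕ),
            W A B (n + 1) (i + 1) y (k.insertNth 1 j)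
            = ((Ring.choose B (i + 1) : ℤ) : ℝ) * (1 + y ^ A) ^ (B - ((i + 1 : ℕ) : ℤ))
              * (((Ring.choose A 1 : ℤ) : ℝ) * ∏ l, ((Ring.choose A (j l) : ℤ) : ℝ))
              * y ^ (A * ((i + 1 : ℕ) : ℤ) - ((n + 1 : ℕ) : ℤ)) := by
          intro k j
          have hp : (∏ l, ((Ring.choose A (Fin.insertNth (α := fun _ => ℕ) k 1 j l) : ℤ) : ℝ))
              = ((Ring.choose A 1 : ℤ) : ℝ) * ∏ l, ((Ring.choose A (j l) : ℤ) : ℝ) := by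
            rw [Fin.prod_univ_succAbove
              (fun l => ((Ring.choose A (Fin.insertNth (α := fun _ => ℕ) k 1 j l) : ℤ) : ℝ)) k]
            simp
          unfold W
          rw [hp]
        calc (∑ k : Fin (i + 1),
              ∑ j' ∈ (cP (n + 1) (i + 1)).filter (fun j' => j' k = 1), W A B (n + 1) (i + 1) y j')
            = ∑ k : Fin (i + 1), ∑ j ∈ cP n i,
                ((Ring.choose B (i + 1) : ℤ) : ℝ) * (1 + y ^ A) ^ (B - ((i + 1 : ℕ) : ℤ))
                  * (((Ring.choose A 1 : ℤ) : ℝ) * ∏ l, ((Ring.choose A (j l) : ℤ) : ℝ))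
                  * y ^ (A * ((i + 1 : ℕ) : ℤ) - ((n + 1 : ℕ) : ℤ)) := by
              refine Finset.sum_congr rfl fun k _ => ?_
              rw [sum_insert_bij k (W A B (n + 1) (i + 1) y)]
              exact Finset.sum_congr rfl fun j _ => hWins k j
          _ = ∑ j ∈ cP n i, ((i : ℝ) + 1) *
                (((Ring.choose B (i + 1) : ℤ) : ℝ) * (1 + y ^ A) ^ (B - ((i + 1 : ℕ) : ℤ))
                  * (((Ring.choose A 1 : ℤ) : ℝ) * ∏ l, ((Ring.choose A (j l) : ℤ) : ℝ))
                  * y ^ (A * ((i + 1 : ℕ) : ℤ) - ((n + 1 : ℕ) : ℤ))) := by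
              rw [Finset.sum_comm]
              refine Finset.sum_congr rfl fun j _ => ?_
              rw [Finset.sum_const, Finset.card_univ, Fintype.card_fin, nsmul_eq_mul]
              push_cast
              ring
          _ = ∑ j ∈ cP n i,
              ((Ring.choose B i : ℤ) : ℝ)
                * ((((B - (i : ℤ) : ℤ)) : ℝ) * (1 + y ^ A) ^ (B - (i : ℤ) - 1)
                  * ((A : ℝ) * y ^ (A - 1)))
                * (∏ k, ((Ring.choose A (j k) : ℤ) : ℝ)) * y ^ (A * (i : ℤ) - (n : ℤ)) := by
              refine Finset.sum_congr rfl fun j _ => ?_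
              have hch := choose_mul_succ_real B i
              have hca1 : ((Ring.choose A 1 : ℤ) : ℝ) = (A : ℝ) := by
                rw [Ring.choose_one_right]
              have hxp : (1 + y ^ A) ^ (B - ((i + 1 : ℕ) : ℤ)) = (1 + y ^ A) ^ (B - (i : ℤ) - 1) := by
                congr 1; push_cast; ring
              have hyp : y ^ (A * ((i + 1 : ℕ) : ℤ) - ((n + 1 : ℕ) : ℤ))
                  = y ^ (A - 1) * y ^ (A * (i : ℤ) - (n : ℤ)) := by
                rw [← zpow_add₀ hy.ne']
                congr 1; push_cast; ring
              rw [hca1, hxp, hyp]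
              push_cast
              linear_combination ((1 + y ^ A) ^ (B - (i : ℤ) - 1) * (A : ℝ) * y ^ (A - 1)
                * y ^ (A * (i : ℤ) - (n : ℤ)) * (∏ k, ((Ring.choose A (j k) : ℤ) : ℝ))) * hch.symm
lemma key_identity (A B : ℤ) (n : ℕ) (hn : 1 ≤ n) (y : ℝ) (hy : 0 < y) :
    ∑ i ∈ Finset.Icc 1 n, ∑ j ∈ cP n i,
        (((Ring.choose B i : ℤ) : ℝ)
            * ((((B - (i : ℤ) : ℤ)) : ℝ) * (1 + y ^ A) ^ (B - (i : ℤ) - 1) * ((A : ℝ) * y ^ (A - 1)))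
            * (∏ k, ((Ring.choose A (j k) : ℤ) : ℝ)) * y ^ (A * (i : ℤ) - (n : ℤ))
          + ((Ring.choose B i : ℤ) : ℝ) * (1 + y ^ A) ^ (B - (i : ℤ))
            * (∏ k, ((Ring.choose A (j k) : ℤ) : ℝ))
            * (((A * (i : ℤ) - (n : ℤ) : ℤ) : ℝ) * y ^ (A * (i : ℤ) - (n : ℤ) - 1)))
    = ((n : ℝ) + 1) * ∑ i ∈ Finset.Icc 1 (n + 1), ∑ j' ∈ cP (n + 1) i, W A B (n + 1) i y j' := by
  have hsplit : ∀ i ∈ Finset.Icc 1 (n + 1), ∀ j' ∈ cP (n + 1) i,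
      ((n : ℝ) + 1) * W A B (n + 1) i y j'
      = (∑ k, (if j' k = 1 then W A B (n + 1) i y j' else 0))
        + (∑ k, (if 2 ≤ j' k then (j' k : ℝ) * W A B (n + 1) i y j' else 0)) := by
    intro i _ j' hj'
    obtain ⟨h1, h2⟩ := mem_cP.mp hj'
    have hn1 : ((n : ℝ) + 1) = ∑ k, (j' k : ℝ) := by
      have h3 : ((∑ k, j' k : ℕ) : ℝ) = ∑ k, (j' k : ℝ) := by push_cast; rfl
      rw [← h3, h2]; push_cast; ring
    rw [hn1, Finset.sum_mul, ← Finset.sum_add_distrib]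
    refine Finset.sum_congr rfl fun k _ => ?_
    rcases eq_or_lt_of_le (h1 k).1 with he | hl
    · rw [if_pos he.symm, if_neg (by omega), ← he]
      norm_num
    · rw [if_neg (by omega), if_pos (by omega)]
      ring
  calc ∑ i ∈ Finset.Icc 1 n, ∑ j ∈ cP n i,
        (((Ring.choose B i : ℤ) : ℝ)
            * ((((B - (i : ℤ) : ℤ)) : ℝ) * (1 + y ^ A) ^ (B - (i : ℤ) - 1) * ((A : ℝ) * y ^ (A - 1)))
            * (∏ k, ((Ring.choose A (j k) : ℤ) : ℝ)) * y ^ (A * (i : ℤ) - (n : ℤ))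
          + ((Ring.choose B i : ℤ) : ℝ) * (1 + y ^ A) ^ (B - (i : ℤ))
            * (∏ k, ((Ring.choose A (j k) : ℤ) : ℝ))
            * (((A * (i : ℤ) - (n : ℤ) : ℤ) : ℝ) * y ^ (A * (i : ℤ) - (n : ℤ) - 1)))
      = (∑ i ∈ Finset.Icc 1 n, ∑ j ∈ cP n i,
          ((Ring.choose B i : ℤ) : ℝ)
            * ((((B - (i : ℤ) : ℤ)) : ℝ) * (1 + y ^ A) ^ (B - (i : ℤ) - 1) * ((A : ℝ) * y ^ (A - 1)))
            * (∏ k, ((Ring.choose A (j k) : ℤ) : ℝ)) * y ^ (A * (i : ℤ) - (n : ℤ)))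
        + ∑ i ∈ Finset.Icc 1 n, ∑ j ∈ cP n i,
          ((Ring.choose B i : ℤ) : ℝ) * (1 + y ^ A) ^ (B - (i : ℤ))
            * (∏ k, ((Ring.choose A (j k) : ℤ) : ℝ))
            * (((A * (i : ℤ) - (n : ℤ) : ℤ) : ℝ) * y ^ (A * (i : ℤ) - (n : ℤ) - 1)) := by
        rw [← Finset.sum_add_distrib]
        exact Finset.sum_congr rfl fun i _ => Finset.sum_add_distrib
    _ = (∑ i ∈ Finset.Icc 1 (n + 1), ∑ j' ∈ cP (n + 1) i,
          ∑ k, (if j' k = 1 then W A B (n + 1) i y j' else 0))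
        + ∑ i ∈ Finset.Icc 1 (n + 1), ∑ j' ∈ cP (n + 1) i,
          ∑ k, (if 2 ≤ j' k then (j' k : ℝ) * W A B (n + 1) i y j' else 0) := by
        rw [part1 A B n hn y hy, part2 A B n y hy]
    _ = ∑ i ∈ Finset.Icc 1 (n + 1), ∑ j' ∈ cP (n + 1) i,
          ((∑ k, (if j' k = 1 then W A B (n + 1) i y j' else 0))
            + ∑ k, (if 2 ≤ j' k then (j' k : ℝ) * W A B (n + 1) i y j' else 0)) := by
        rw [← Finset.sum_add_distrib]
        exact Finset.sum_congr rfl fun i _ => (Finset.sum_add_distrib).symm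
    _ = ((n : ℝ) + 1) * ∑ i ∈ Finset.Icc 1 (n + 1), ∑ j' ∈ cP (n + 1) i, W A B (n + 1) i y j' := by
        rw [Finset.mul_sum]
        refine Finset.sum_congr rfl fun i hi => ?_
        rw [Finset.mul_sum]
        exact Finset.sum_congr rfl fun j' hj' => (hsplit i hi j' hj').symm

lemma hasDerivAt_term (A : ℤ) (c p : ℝ) (E M : ℤ) (y : ℝ) (hy : 0 < y) :
    HasDerivAt (fun y : ℝ => c * (1 + y ^ A) ^ E * p * y ^ M)
      (c * ((E : ℝ) * (1 + y ^ A) ^ (E - 1) * ((A : ℝ) * y ^ (A - 1))) * p * y ^ M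
        + c * (1 + y ^ A) ^ E * p * ((M : ℝ) * y ^ (M - 1))) y := by
  have hyA : (0 : ℝ) < y ^ A := zpow_pos hy A
  have hx : (0 : ℝ) < 1 + y ^ A := by linarith
  have hA : HasDerivAt (fun y : ℝ => 1 + y ^ A) ((A : ℝ) * y ^ (A - 1)) y :=
    (hasDerivAt_zpow A y (Or.inl hy.ne')).const_add 1
  have hB : HasDerivAt (fun u : ℝ => u ^ E) ((E : ℝ) * (1 + y ^ A) ^ (E - 1)) (1 + y ^ A) :=
    hasDerivAt_zpow E _ (Or.inl hx.ne')
  have h1 : HasDerivAt (fun y : ℝ => (1 + y ^ A) ^ E)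
      ((E : ℝ) * (1 + y ^ A) ^ (E - 1) * ((A : ℝ) * y ^ (A - 1))) y := by have := hB.comp y hA; exact this
  have h2 : HasDerivAt (fun y : ℝ => y ^ M) ((M : ℝ) * y ^ (M - 1)) y :=
    hasDerivAt_zpow M y (Or.inl hy.ne')
  exact ((h1.const_mul c).mul_const p).mul h2

lemma hasDerivAt_S (A B : ℤ) (n : ℕ) (hn : 1 ≤ n) (y : ℝ) (hy : 0 < y) :
    HasDerivAt (fun y => ∑ i ∈ Finset.Icc 1 n, ∑ j ∈ cP n i, W A B n i y j)
      (((n : ℝ) + 1) * ∑ i ∈ Finset.Icc 1 (n + 1), ∑ j' ∈ cP (n + 1) i, W A B (n + 1) i y j')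
      y := by
  rw [← key_identity A B n hn y hy]
  refine HasDerivAt.fun_sum fun i _ => HasDerivAt.fun_sum fun j _ => ?_
  have h := hasDerivAt_term A ((Ring.choose B i : ℤ) : ℝ) (∏ k, ((Ring.choose A (j k) : ℤ) : ℝ))
    (B - (i : ℤ)) (A * (i : ℤ) - (n : ℤ)) y hy
  exact h
lemma cP_one_one : cP 1 1 = {fun _ => 1} := by
  ext j
  rw [mem_cP, Finset.mem_singleton]
  constructor
  · rintro ⟨h1, h2⟩
    funext k
    rw [Fin.sum_univ_one] at h2
    have : k = 0 := Subsingleton.elim _ _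
    rw [this, h2]
  · rintro rfl
    exact ⟨fun _ => ⟨le_refl 1, le_refl 1⟩, by simp⟩

lemma main_aux (A B : ℤ) (n : ℕ) (hn : 1 ≤ n) :
    ∀ y : ℝ, 0 < y → iteratedDeriv n (fun y : ℝ => (1 + y ^ A) ^ B) y
      = (n.factorial : ℝ) * ∑ i ∈ Finset.Icc 1 n, ∑ j ∈ cP n i, W A B n i y j := by
  induction n, hn using Nat.le_induction with
  | base =>
    intro y hy
    have hyA : (0 : ℝ) < y ^ A := zpow_pos hy A
    have hx : (0 : ℝ) < 1 + y ^ A := by linarith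
    have hA : HasDerivAt (fun y : ℝ => 1 + y ^ A) ((A : ℝ) * y ^ (A - 1)) y :=
      (hasDerivAt_zpow A y (Or.inl hy.ne')).const_add 1
    have hB : HasDerivAt (fun u : ℝ => u ^ B) ((B : ℝ) * (1 + y ^ A) ^ (B - 1)) (1 + y ^ A) :=
      hasDerivAt_zpow B _ (Or.inl hx.ne')
    have hder : HasDerivAt (fun y : ℝ => (1 + y ^ A) ^ B)
        ((B : ℝ) * (1 + y ^ A) ^ (B - 1) * ((A : ℝ) * y ^ (A - 1))) y := by have := hB.comp y hA; exact this
    rw [iteratedDeriv_one, hder.deriv]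
    rw [show Finset.Icc 1 1 = {1} from rfl, Finset.sum_singleton, cP_one_one,
      Finset.sum_singleton]
    unfold W
    rw [Fin.prod_univ_one]
    have h1 : ((Ring.choose B 1 : ℤ) : ℝ) = (B : ℝ) := by rw [Ring.choose_one_right]
    have h2 : ((Ring.choose A 1 : ℤ) : ℝ) = (A : ℝ) := by rw [Ring.choose_one_right]
    rw [h1, h2]
    have h3 : (1 + y ^ A) ^ (B - ((1 : ℕ) : ℤ)) = (1 + y ^ A) ^ (B - 1) := by norm_num
    have h4 : y ^ (A * ((1 : ℕ) : ℤ) - ((1 : ℕ) : ℤ)) = y ^ (A - 1) := by norm_num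
    rw [h3, h4]
    norm_num
    ring
  | succ n hn ih =>
    intro y hy
    rw [iteratedDeriv_succ]
    have hev : deriv (iteratedDeriv n (fun y : ℝ => (1 + y ^ A) ^ B)) y
        = deriv (fun y : ℝ =>
            (n.factorial : ℝ) * ∑ i ∈ Finset.Icc 1 n, ∑ j ∈ cP n i, W A B n i y j) y := by
      apply Filter.EventuallyEq.deriv_eq
      filter_upwards [Ioi_mem_nhds hy] with z hz
      exact ih z hz
    rw [hev]
    have hd : HasDerivAt (fun y : ℝ =>
          (n.factorial : ℝ) * ∑ i ∈ Finset.Icc 1 n, ∑ j ∈ cP n i, W A B n i y j)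
        ((n.factorial : ℝ) * (((n : ℝ) + 1)
          * ∑ i ∈ Finset.Icc 1 (n + 1), ∑ j' ∈ cP (n + 1) i, W A B (n + 1) i y j')) y :=
      (hasDerivAt_S A B n hn y hy).const_mul _
    rw [hd.deriv, Nat.factorial_succ]
    push_cast
    ring



/-- Lemma 2.6: for integers `A, B` and a positive integer `n`, the `n`-th derivative of
`y ↦ (1 + y^A)^B` at any `y > 0` equals
`n! Σ_{i=1}^n Σ_{j₁+⋯+jᵢ=n, jₖ≥1} C(B,i) (1+y^A)^(B-i) C(A,j₁)⋯C(A,jᵢ) y^(Ai-n)`,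
where `C(x, k)` is the generalized binomial coefficient (`Ring.choose` on `ℤ`). -/
theorem iteratedDeriv_one_add_zpow_pow (A B : ℤ) (n : ℕ) (hn : 0 < n) (y : ℝ) (hy : 0 < y) :
    iteratedDeriv n (fun y : ℝ => (1 + y ^ A) ^ B) y
    = (n.factorial : ℝ) * ∑ i ∈ Finset.Icc 1 n,
        ∑ j ∈ (Fintype.piFinset fun _ : Fin i => Finset.Icc 1 n).filter
            (fun j => ∑ k, j k = n),
          ((Ring.choose B i : ℤ) : ℝ) * (1 + y ^ A) ^ (B - (i : ℤ))
            * (∏ k, ((Ring.choose A (j k) : ℤ) : ℝ)) * y ^ (A * (i : ℤ) - (n : ℤ)) := by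
  exact main_aux A B n hn y hy
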